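/- Let p be an odd prime and v ≥ 1. The number of pairs (α, β) with 0 ≤ α, β < p^v, not both divisible by p, satisfying (α² - β² - 2αβ)(α² - β² + 2αβ) ≡ 0 (mod p^v) is 4φ(p^v) if 2 is a quadratic residue modulo p, and 0 otherwise. -/

import Mathlib

open scoped Classical

-- split lemma
lemma aux_split (p : ℕ) (hp : p.Prime) (v : ℕ) (A B : ℤ)
    (h : (p:ℤ)^v ∣ A * B) (hnb : ¬((p:ℤ) ∣ A ∧ (p:ℤ) ∣ B)) :
    (p:ℤ)^v ∣ A ∨ (p:ℤ)^v ∣ B := by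
  by_cases hA : (p:ℤ) ∣ A
  · have hB : ¬ (p:ℤ) ∣ B := fun hB => hnb ⟨hA, hB⟩
    have hc : IsCoprime ((p:ℤ)^v) B :=
      (((Nat.prime_iff_prime_int.mp hp).coprime_iff_not_dvd).2 hB).pow_left
    exact Or.inl (hc.dvd_of_dvd_mul_right h)
  · have hc : IsCoprime ((p:ℤ)^v) A :=
      (((Nat.prime_iff_prime_int.mp hp).coprime_iff_not_dvd).2 hA).pow_left
    exact Or.inr (hc.dvd_of_dvd_mul_left h)

lemma aux_hensel (p : ℕ) (hp : p.Prime) (hodd : Odd p) (hsq : IsSquare (2 : ZMod p)) :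
    ∀ k : ℕ, ∃ s : ℤ, (p:ℤ)^(k+1) ∣ s^2 - 2 := by
  haveI : Fact p.Prime := ⟨hp⟩
  have hp2 : ¬ (p:ℤ) ∣ 2 := by
    intro h
    have h2 : p ∣ 2 := by exact_mod_cast h
    have := (Nat.prime_dvd_prime_iff_eq hp Nat.prime_two).1 h2
    rw [this] at hodd
    exact (Nat.not_odd_iff_even.2 even_two) hodd
  intro k
  induction k with
  | zero =>
    obtain ⟨r, hr⟩ := hsq
    refine ⟨(r.val : ℤ), ?_⟩
    rw [pow_one, ← ZMod.intCast_zmod_eq_zero_iff_dvd]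
    push_cast
    rw [ZMod.natCast_val, ZMod.cast_id, hr]
    ring
  | succ k ih =>
    obtain ⟨s, hm⟩ := ih
    obtain ⟨m, hm⟩ := hm
    have hpk : (p:ℤ) ∣ (p:ℤ)^(k+1) := dvd_pow_self _ (Nat.succ_ne_zero k)
    have hps : ¬ (p:ℤ) ∣ s := by
      intro h
      exact hp2 (by have h1 : (p:ℤ) ∣ s^2 - 2 := hm ▸ hpk.mul_right m
                    have h2 : (p:ℤ) ∣ s^2 := by rw [sq]; exact h.mul_left s
                    simpa using h2.sub h1)
    have h2s : ((2*s : ℤ) : ZMod p) ≠ 0 := by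
      rw [Ne, ZMod.intCast_zmod_eq_zero_iff_dvd]
      intro h
      rcases (Nat.prime_iff_prime_int.mp hp).dvd_mul.mp h with h | h
      · exact hp2 h
      · exact hps h
    set t : ℤ := ((-(m : ZMod p) * ((2*s : ℤ) : ZMod p)⁻¹).val : ℤ) with ht
    have hdvd : (p:ℤ) ∣ m + 2*s*t := by
      rw [← ZMod.intCast_zmod_eq_zero_iff_dvd]
      push_cast [ht]
      rw [ZMod.natCast_val, ZMod.cast_id]
      have h2s' : (2*(s:ZMod p)) ≠ 0 := by push_cast at h2s; exact h2s
      field_simp [h2s']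
      rw [div_self h2s', add_neg_cancel, mul_zero]
    refine ⟨s + t*(p:ℤ)^(k+1), ?_⟩
    have key : (s + t*(p:ℤ)^(k+1))^2 - 2
        = (p:ℤ)^(k+1)*(m + 2*s*t) + t^2*((p:ℤ)^(k+1))^2 := by
      linear_combination hm
    rw [key]
    refine dvd_add ?_ ?_
    · rw [pow_succ]
      exact mul_dvd_mul_left _ hdvd
    · exact ((pow_dvd_pow (p:ℤ) (by omega : k+2 ≤ (k+1)*2)).trans
        (by rw [pow_mul])).mul_left _

lemma aux_unit (p : ℕ) (hp : p.Prime) (v : ℕ) (hv : 1 ≤ v) (α β : ℤ)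
    (hne : ¬((p:ℤ) ∣ α ∧ (p:ℤ) ∣ β))
    (hdvd : (p:ℤ)^v ∣ (α^2 - β^2 - 2*α*β) * (α^2 - β^2 + 2*α*β)) :
    ¬(p:ℤ) ∣ α ∧ ¬(p:ℤ) ∣ β := by
  have hpP : Prime (p:ℤ) := Nat.prime_iff_prime_int.mp hp
  have h1 : (p:ℤ) ∣ (α^2 - β^2 - 2*α*β) * (α^2 - β^2 + 2*α*β) :=
    (dvd_pow_self (p:ℤ) (by omega : v ≠ 0)).trans hdvd
  have main : ∀ ε : ℤ, (p:ℤ) ∣ (α^2 - β^2 + ε*(2*α*β)) → ((p:ℤ) ∣ α ↔ (p:ℤ) ∣ β) := by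
    intro ε hf
    constructor
    · intro hα
      have d1 : (p:ℤ) ∣ α*α := hα.mul_left α
      have d2 : (p:ℤ) ∣ (ε*2*α)*β := (hα.mul_left (ε*2)).mul_right β
      have h4 := (d1.add d2).sub hf
      have e : α*α + (ε*2*α)*β - (α^2 - β^2 + ε*(2*α*β)) = β^2 := by ring
      rw [e] at h4
      exact hpP.dvd_of_dvd_pow h4
    · intro hβ
      have d1 : (p:ℤ) ∣ β*β := hβ.mul_left β
      have d2 : (p:ℤ) ∣ (ε*2*α)*β := hβ.mul_left (ε*2*α)
      have h4 := (hf.add d1).sub d2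
      have e : (α^2 - β^2 + ε*(2*α*β)) + β*β - (ε*2*α)*β = α^2 := by ring
      rw [e] at h4
      exact hpP.dvd_of_dvd_pow h4
  rcases hpP.dvd_mul.mp h1 with hf | hf
  · have := main (-1)
      (by rw [show α^2 - β^2 + (-1)*(2*α*β) = α^2 - β^2 - 2*α*β from by ring]; exact hf)
    tauto
  · have := main 1
      (by rw [show α^2 - β^2 + 1*(2*α*β) = α^2 - β^2 + 2*α*β from by ring]; exact hf)
    tauto

lemma aux_nosol (p : ℕ) (hp : p.Prime) (v : ℕ) (hv : 1 ≤ v)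
    (hns : ¬ IsSquare (2 : ZMod p)) (α β : ℤ)
    (hne : ¬((p:ℤ) ∣ α ∧ (p:ℤ) ∣ β)) :
    ¬ (p:ℤ)^v ∣ (α^2 - β^2 - 2*α*β) * (α^2 - β^2 + 2*α*β) := by
  intro hdvd
  haveI : Fact p.Prime := ⟨hp⟩
  obtain ⟨hα, hβ⟩ := aux_unit p hp v hv α β hne hdvd
  have hpP : Prime (p:ℤ) := Nat.prime_iff_prime_int.mp hp
  have h1 : (p:ℤ) ∣ (α^2 - β^2 - 2*α*β) * (α^2 - β^2 + 2*α*β) :=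
    (dvd_pow_self (p:ℤ) (by omega : v ≠ 0)).trans hdvd
  have hy : ((β : ℤ) : ZMod p) ≠ 0 := by
    rw [Ne, ZMod.intCast_zmod_eq_zero_iff_dvd]; exact hβ
  rcases hpP.dvd_mul.mp h1 with hf | hf
  · apply hns
    have h0 : ((α^2 - β^2 - 2*α*β : ℤ) : ZMod p) = 0 :=
      (ZMod.intCast_zmod_eq_zero_iff_dvd _ _).2 hf
    push_cast at h0
    refine ⟨((α:ZMod p) - (β:ZMod p)) * ((β:ZMod p))⁻¹, ?_⟩
    field_simp
    linear_combination -h0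
  · apply hns
    have h0 : ((α^2 - β^2 + 2*α*β : ℤ) : ZMod p) = 0 :=
      (ZMod.intCast_zmod_eq_zero_iff_dvd _ _).2 hf
    push_cast at h0
    refine ⟨((α:ZMod p) + (β:ZMod p)) * ((β:ZMod p))⁻¹, ?_⟩
    field_simp
    linear_combination -h0

lemma aux_hp2 (p : ℕ) (hp : p.Prime) (hodd : Odd p) : ¬ (p:ℤ) ∣ 2 := by
  intro h
  have h2 : p ∣ 2 := by exact_mod_cast h
  have := (Nat.prime_dvd_prime_iff_eq hp Nat.prime_two).1 h2
  rw [this] at hodd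
  exact (Nat.not_odd_iff_even.2 even_two) hodd

lemma aux_hps (p : ℕ) (hp : p.Prime) (hodd : Odd p) (s : ℤ) (hs2 : (p:ℤ) ∣ s^2 - 2) :
    ¬ (p:ℤ) ∣ s := by
  intro h
  have h2 : (p:ℤ) ∣ s^2 := by rw [sq]; exact h.mul_left s
  exact aux_hp2 p hp hodd (by simpa using h2.sub hs2)

lemma aux_hp1s (p : ℕ) (hp : p.Prime) (hodd : Odd p) (s : ℤ) (hs2 : (p:ℤ) ∣ s^2 - 2) :
    ¬ (p:ℤ) ∣ (1+s) ∧ ¬ (p:ℤ) ∣ (1-s) := by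
  have hpP : Prime (p:ℤ) := Nat.prime_iff_prime_int.mp hp
  constructor
  · intro h
    have h2 : (p:ℤ) ∣ (1+s)*(s-1) := h.mul_right _
    have h3 := h2.sub hs2
    rw [show (1+s)*(s-1) - (s^2-2) = 1 from by ring] at h3
    exact hpP.not_dvd_one h3
  · intro h
    have h2 : (p:ℤ) ∣ (1-s)*(-1-s) := h.mul_right _
    have h3 := h2.sub hs2
    rw [show (1-s)*(-1-s) - (s^2-2) = 1 from by ring] at h3
    exact hpP.not_dvd_one h3

lemma aux_pair (p : ℕ) (hp : p.Prime) (hodd : Odd p) (s : ℤ) (hs2 : (p:ℤ) ∣ s^2 - 2) :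
    ∀ i j : Fin 4, i ≠ j →
      ¬ (p:ℤ) ∣ (![1+s,1-s,-1+s,-1-s] i - ![1+s,1-s,-1+s,-1-s] j) := by
  have hpP : Prime (p:ℤ) := Nat.prime_iff_prime_int.mp hp
  have hp2 := aux_hp2 p hp hodd
  have hps := aux_hps p hp hodd s hs2
  obtain ⟨hpa, hpb⟩ := aux_hp1s p hp hodd s hs2
  have hp1 : ¬ (p:ℤ) ∣ 1 := hpP.not_dvd_one
  have solve : ∀ x e : ℤ, ¬(p:ℤ) ∣ e → (x = 2*e ∨ x = -(2*e)) → ¬ (p:ℤ) ∣ x := by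
    rintro x e he (rfl | rfl) h
    · rcases hpP.dvd_mul.mp h with h | h
      · exact hp2 h
      · exact he h
    · rcases hpP.dvd_mul.mp (dvd_neg.mp h) with h | h
      · exact hp2 h
      · exact he h
  intro i j hij
  fin_cases i <;> fin_cases j <;> simp_all
  all_goals first
    | (refine solve _ s hps (Or.inl ?_); ring1)
    | (refine solve _ s hps (Or.inr ?_); ring1)
    | (refine solve _ 1 hp1 (Or.inl ?_); ring1)
    | (refine solve _ 1 hp1 (Or.inr ?_); ring1)
    | (refine solve _ (1+s) hpa (Or.inl ?_); ring1)
    | (refine solve _ (1+s) hpa (Or.inr ?_); ring1)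
    | (refine solve _ (1-s) hpb (Or.inl ?_); ring1)
    | (refine solve _ (1-s) hpb (Or.inr ?_); ring1)

lemma aux_char (p : ℕ) (hp : p.Prime) (hodd : Odd p) (v : ℕ) (hv : 1 ≤ v)
    (s : ℤ) (hs : (p:ℤ)^v ∣ s^2 - 2) (α β : ℤ) :
    (¬((p:ℤ) ∣ α ∧ (p:ℤ) ∣ β) ∧
      (p:ℤ)^v ∣ (α^2 - β^2 - 2*α*β) * (α^2 - β^2 + 2*α*β)) ↔
    (¬ (p:ℤ) ∣ β ∧ ∃ i : Fin 4, (p:ℤ)^v ∣ (α - ![1+s,1-s,-1+s,-1-s] i * β)) := by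
  have hpP : Prime (p:ℤ) := Nat.prime_iff_prime_int.mp hp
  have hvne : v ≠ 0 := by omega
  have hs1 : (p:ℤ) ∣ s^2 - 2 := (dvd_pow_self (p:ℤ) hvne).trans hs
  have hp2 := aux_hp2 p hp hodd
  have hps := aux_hps p hp hodd s hs1
  have e0 : (α^2 - β^2 - 2*α*β) = (α - (1+s)*β)*(α - (1-s)*β) + (s^2-2)*β^2 := by ring
  have e2 : (α^2 - β^2 + 2*α*β) = (α - (-1+s)*β)*(α - (-1-s)*β) + (s^2-2)*β^2 := by ring
  constructor
  · rintro ⟨hne, hd⟩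
    obtain ⟨hα, hβ⟩ := aux_unit p hp v hv α β hne hd
    refine ⟨hβ, ?_⟩
    have hnotboth : ¬((p:ℤ) ∣ (α^2 - β^2 - 2*α*β) ∧ (p:ℤ) ∣ (α^2 - β^2 + 2*α*β)) := by
      rintro ⟨h1, h2⟩
      have h3 := h2.sub h1
      rw [show (α^2 - β^2 + 2*α*β) - (α^2 - β^2 - 2*α*β) = 2*(2*(α*β)) from by ring] at h3
      rcases hpP.dvd_mul.mp h3 with h | h
      · exact hp2 h
      rcases hpP.dvd_mul.mp h with h | h
      · exact hp2 h
      rcases hpP.dvd_mul.mp h with h | h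
      · exact hα h
      · exact hβ h
    have hsplitβ : ∀ c d : ℤ, d - c = -(2*s) →
        (p:ℤ)^v ∣ (α - c*β)*(α - d*β) →
        (p:ℤ)^v ∣ (α - c*β) ∨ (p:ℤ)^v ∣ (α - d*β) := by
      intro c d hcd hprod
      refine aux_split p hp v _ _ hprod ?_
      rintro ⟨h1, h2⟩
      have h3 := h1.sub h2
      rw [show (α - c*β) - (α - d*β) = (d - c)*β from by ring, hcd] at h3
      have h3' : (p:ℤ) ∣ (2*s)*β := (dvd_neg.mp (by rwa [neg_mul] at h3))
      rcases hpP.dvd_mul.mp h3' with h | h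
      · rcases hpP.dvd_mul.mp h with h | h
        · exact hp2 h
        · exact hps h
      · exact hβ h
    rcases aux_split p hp v _ _ hd hnotboth with hf | hg
    · have hprod : (p:ℤ)^v ∣ (α - (1+s)*β)*(α - (1-s)*β) := by
        rw [show (α - (1+s)*β)*(α - (1-s)*β) = (α^2 - β^2 - 2*α*β) - (s^2-2)*β^2 from by
          linear_combination e0]
        exact hf.sub (hs.mul_right _)
      rcases hsplitβ (1+s) (1-s) (by ring) hprod with h | h
      · exact ⟨0, by simpa using h⟩
      · exact ⟨1, by simpa using h⟩
    · have hprod : (p:ℤ)^v ∣ (α - (-1+s)*β)*(α - (-1-s)*β) := by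
        rw [show (α - (-1+s)*β)*(α - (-1-s)*β) = (α^2 - β^2 + 2*α*β) - (s^2-2)*β^2 from by
          linear_combination e2]
        exact hg.sub (hs.mul_right _)
      rcases hsplitβ (-1+s) (-1-s) (by ring) hprod with h | h
      · exact ⟨2, by simpa using h⟩
      · exact ⟨3, by simpa using h⟩
  · rintro ⟨hβ, i, hi⟩
    refine ⟨fun h => hβ h.2, ?_⟩
    fin_cases i <;> simp only [Matrix.cons_val_zero, Matrix.cons_val_one, Matrix.head_cons,
      Matrix.cons_val_two, Matrix.tail_cons, Matrix.cons_val_three, Matrix.head_fin_const,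
      Fin.isValue] at hi
    · exact (e0 ▸ dvd_add (hi.mul_right _) (hs.mul_right _)).mul_right _
    · exact (e0 ▸ dvd_add (hi.mul_left _) (hs.mul_right _)).mul_right _
    · exact (e2 ▸ dvd_add (hi.mul_right _) (hs.mul_right _)).mul_left _
    · exact (e2 ▸ dvd_add (hi.mul_left _) (hs.mul_right _)).mul_left _

/-- For an odd prime `p` and `v ≥ 1`, the number of pairs `(α,β)` with `0 ≤ α, β < p^v`,
not both divisible by `p`, with `p^v ∣ (α²-β²-2αβ)(α²-β²+2αβ)` is `4φ(p^v)` if `2` is a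
square mod `p`, and `0` otherwise. -/
theorem stmt_12 (p : ℕ) (hp : p.Prime) (hodd : Odd p) (v : ℕ) (hv : 1 ≤ v) :
    ((Finset.range (p ^ v) ×ˢ Finset.range (p ^ v)).filter fun x =>
        ¬(p ∣ x.1 ∧ p ∣ x.2) ∧
          (p : ℤ) ^ v ∣ ((x.1 : ℤ) ^ 2 - (x.2 : ℤ) ^ 2 - 2 * x.1 * x.2) *
            ((x.1 : ℤ) ^ 2 - (x.2 : ℤ) ^ 2 + 2 * x.1 * x.2)).card =
      if IsSquare (2 : ZMod p) then 4 * Nat.totient (p ^ v) else 0 := by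
  haveI : Fact p.Prime := ⟨hp⟩
  have hpP : Prime (p:ℤ) := Nat.prime_iff_prime_int.mp hp
  have hN0 : 0 < p ^ v := pow_pos hp.pos v
  have hNc : (((p^v : ℕ)):ℤ) = (p:ℤ)^v := by push_cast; ring
  have hNZ0 : (0:ℤ) < ((p^v : ℕ):ℤ) := by exact_mod_cast hN0
  have hcast : ∀ a b : ℕ, (¬(p ∣ a ∧ p ∣ b)) ↔ ¬((p:ℤ) ∣ (a:ℤ) ∧ (p:ℤ) ∣ (b:ℤ)) := by
    intro a b
    constructor
    · rintro h ⟨h1, h2⟩; exact h ⟨Int.natCast_dvd_natCast.mp h1, Int.natCast_dvd_natCast.mp h2⟩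
    · rintro h ⟨h1, h2⟩; exact h ⟨Int.natCast_dvd_natCast.mpr h1, Int.natCast_dvd_natCast.mpr h2⟩
  by_cases hsq : IsSquare (2 : ZMod p)
  · rw [if_pos hsq]
    obtain ⟨s, hs⟩ := aux_hensel p hp hodd hsq (v-1)
    rw [show v - 1 + 1 = v from by omega] at hs
    have hs1 : (p:ℤ) ∣ s^2-2 := (dvd_pow_self (p:ℤ) (by omega : v ≠ 0)).trans hs
    have hpair := aux_pair p hp hodd s hs1
    set c : Fin 4 → ℤ := ![1+s,1-s,-1+s,-1-s] with hc
    have himg : ((Finset.range (p ^ v) ×ˢ Finset.range (p ^ v)).filter fun x =>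
        ¬(p ∣ x.1 ∧ p ∣ x.2) ∧
          (p : ℤ) ^ v ∣ ((x.1 : ℤ) ^ 2 - (x.2 : ℤ) ^ 2 - 2 * x.1 * x.2) *
            ((x.1 : ℤ) ^ 2 - (x.2 : ℤ) ^ 2 + 2 * x.1 * x.2))
        = Finset.image (fun ib : Fin 4 × ℕ => (((c ib.1 * ib.2) % ((p^v : ℕ):ℤ)).toNat, ib.2))
            ((Finset.univ : Finset (Fin 4)) ×ˢ ((Finset.range (p^v)).filter fun b => ¬ p ∣ b)) := by
      ext x
      simp only [Finset.mem_filter, Finset.mem_product, Finset.mem_range, Finset.mem_image,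
        Finset.mem_univ, true_and]
      constructor
      · rintro ⟨⟨ha, hb⟩, hcond⟩
        have hcond' : ¬((p:ℤ) ∣ (x.1:ℤ) ∧ (p:ℤ) ∣ (x.2:ℤ)) ∧
            (p:ℤ)^v ∣ ((x.1:ℤ)^2 - (x.2:ℤ)^2 - 2*(x.1:ℤ)*(x.2:ℤ)) *
              ((x.1:ℤ)^2 - (x.2:ℤ)^2 + 2*(x.1:ℤ)*(x.2:ℤ)) :=
          ⟨(hcast x.1 x.2).mp hcond.1, hcond.2⟩
        obtain ⟨hβ, i, hi⟩ := (aux_char p hp hodd v hv s hs x.1 x.2).mp hcond'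
        refine ⟨(i, x.2), ⟨⟨hb, fun h => hβ (Int.natCast_dvd_natCast.mpr h)⟩, ?_⟩⟩
        have e1 : ((x.1:ℤ)) % ((p^v : ℕ):ℤ) = (c i * x.2) % ((p^v : ℕ):ℤ) := by
          rw [Int.emod_eq_emod_iff_emod_sub_eq_zero]
          apply Int.emod_eq_zero_of_dvd
          rw [hNc]
          exact hi
        have e2 : ((x.1:ℤ)) % ((p^v : ℕ):ℤ) = (x.1:ℤ) :=
          Int.emod_eq_of_lt (by positivity) (by exact_mod_cast ha)
        have e3 : ((c i * x.2) % ((p^v : ℕ):ℤ)).toNat = x.1 := by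
          rw [← e1, e2]; exact Int.toNat_natCast _
        exact Prod.ext e3 rfl
      · rintro ⟨⟨i, b⟩, ⟨⟨hbN, hpb⟩, rfl⟩⟩
        have hnn : 0 ≤ (c i * b) % ((p^v : ℕ):ℤ) := Int.emod_nonneg _ (by positivity)
        have hlt : (c i * b) % ((p^v : ℕ):ℤ) < ((p^v : ℕ):ℤ) := Int.emod_lt_of_pos _ hNZ0
        have haN : ((c i * b) % ((p^v : ℕ):ℤ)).toNat < p^v := (Int.toNat_lt hnn).mpr hlt
        refine ⟨⟨haN, hbN⟩, ?_⟩
        have hii : ((((c i * b) % ((p^v : ℕ):ℤ)).toNat : ℕ) : ℤ) = (c i * b) % ((p^v : ℕ):ℤ) :=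
          Int.toNat_of_nonneg hnn
        have hdvd : (p:ℤ)^v ∣ ((((c i * b) % ((p^v : ℕ):ℤ)).toNat : ℤ) - c i * b) := by
          rw [hii, Int.emod_def, ← hNc]
          exact ⟨-((c i * b)/((p^v : ℕ):ℤ)), by ring⟩
        have hβ : ¬ (p:ℤ) ∣ (b:ℤ) := fun h => hpb (Int.natCast_dvd_natCast.mp h)
        have hres := (aux_char p hp hodd v hv s hs _ (b:ℤ)).mpr ⟨hβ, i, hdvd⟩
        exact ⟨(hcast _ _).mpr hres.1, hres.2⟩
    rw [himg, Finset.card_image_of_injOn, Finset.card_product, Finset.card_univ,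
      Fintype.card_fin]
    · congr 1
      rw [Nat.totient_eq_card_coprime]
      congr 1
      apply Finset.filter_congr
      intro b _
      rw [iff_comm]
      rw [Nat.coprime_pow_left_iff (show 0 < v by omega), hp.coprime_iff_not_dvd]
    · rintro ⟨i, b⟩ hib ⟨j, b'⟩ hjb' heq
      simp only [Finset.coe_product, Set.mem_prod, Finset.mem_coe, Finset.mem_filter,
        Finset.mem_range, Finset.mem_univ, true_and] at hib hjb'
      simp only [Prod.mk.injEq] at heq
      obtain ⟨h1, h2⟩ := heq
      subst h2
      have hβ : ¬ (p:ℤ) ∣ (b:ℤ) := fun h => hib.2 (Int.natCast_dvd_natCast.mp h)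
      have hij : i = j := by
        by_contra hij
        apply hpair i j hij
        have hnn1 : 0 ≤ (c i * b) % ((p^v : ℕ):ℤ) := Int.emod_nonneg _ (by positivity)
        have hnn2 : 0 ≤ (c j * b) % ((p^v : ℕ):ℤ) := Int.emod_nonneg _ (by positivity)
        have e : (c i * b) % ((p^v : ℕ):ℤ) = (c j * b) % ((p^v : ℕ):ℤ) := by
          rw [← Int.toNat_of_nonneg hnn1, ← Int.toNat_of_nonneg hnn2, h1]
        have hd : ((p^v : ℕ):ℤ) ∣ (c i * b - c j * b) :=
          Int.dvd_of_emod_eq_zero (Int.emod_eq_emod_iff_emod_sub_eq_zero.mp e)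
        rw [show c i * (b:ℤ) - c j * b = (c i - c j) * (b:ℤ) from by ring, hNc] at hd
        have hco : IsCoprime ((p:ℤ)^v) (b:ℤ) := (hpP.coprime_iff_not_dvd.2 hβ).pow_left
        exact (dvd_pow_self (p:ℤ) (by omega : v ≠ 0)).trans (hco.dvd_of_dvd_mul_right hd)
      rw [hij]
  · rw [if_neg hsq]
    rw [Finset.card_eq_zero, Finset.filter_eq_empty_iff]
    intro x hx
    rintro ⟨h1, h2⟩
    exact aux_nosol p hp v hv hsq x.1 x.2 ((hcast _ _).mp h1) h2
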